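/- Assume ∂κ/∂u and ∂²κ/∂u² exist and are continuous on Ω, let f be bounded on [a,b], let δ₀ > 0 and let φ : [a,b] → ℝ be bounded; set C₆ = sup{|∂²κ/∂u²(s,t,u)| : s,t ∈ [a,b], |u| ≤ ‖φ‖_∞ + δ₀}. Suppose φ_m ∈ B(φ,δ₀) is a bounded solution of x − K_m(x) = f and z ∈ B(φ,δ₀) is bounded, and set z̃ = K_m(z) + f. Then ‖z̃ − φ_m − K_m'(φ_m)(z − φ_m)‖_∞ ≤ (C₆·(b−a)·W/2) · ‖z − φ_m‖_∞². In particular, if ‖z − φ_m‖_∞ ≤ c·max{h̃^d, h^{3r}} for some constant c and reals h̃, h > 0 and integers d, then ‖z̃ − φ_m − K_m'(φ_m)(z − φ_m)‖_∞ ≤ (C₆·(b−a)·W/2)·c²·(max{h̃^d, h^{3r}})². -/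

import Mathlib

open Set

noncomputable section

/-- Supremum of `|x|` over `[a, b]`. -/
def supIcc (a b : ℝ) (x : ℝ → ℝ) : ℝ := ⨆ t : Set.Icc a b, |x t.1|

/-- `x` is bounded on `[a, b]`. -/
def BddIcc (a b : ℝ) (x : ℝ → ℝ) : Prop := ∃ M, ∀ t ∈ Set.Icc a b, |x t| ≤ M

/-- The quadrature rule `(w, μ)` on `[0,1]` has degree of precision at least `k`:
it integrates exactly all polynomials of degree at most `k`. -/
def Precision {ρ : ℕ} (w μ : Fin ρ → ℝ) (k : ℕ) : Prop :=
  ∀ P : Polynomial ℝ, P.natDegree ≤ k →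
    ∑ i, w i * P.eval (μ i) = ∫ t in (0:ℝ)..1, P.eval t

/-- `Ψ(t) = ∏ i (t - q i)`. -/
def Psi {r : ℕ} (q : Fin r → ℝ) (t : ℝ) : ℝ := ∏ i, (t - q i)

/-- `q` lists the Gauss points of order `r` in `(0,1)`. -/
def GaussPts {r : ℕ} (q : Fin r → ℝ) : Prop :=
  StrictMono q ∧ (∀ i, q i ∈ Set.Ioo (0:ℝ) 1) ∧
    ∀ j, j < r → ∫ t in (0:ℝ)..1, t ^ j * Psi q t = 0

/-- Quadrature nodes `ζ_i^{j+1}` of the composite rule, `j = 0, …, m-1`. -/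
def qNode {ρ : ℕ} (a b : ℝ) (μ : Fin ρ → ℝ) (m j : ℕ) (i : Fin ρ) : ℝ :=
  a + (j : ℝ) * ((b - a) / m) + μ i * ((b - a) / m)

/-- Nyström operator, linear kernel. -/
def nystL {ρ : ℕ} (a b : ℝ) (w μ : Fin ρ → ℝ) (m : ℕ) (κ : ℝ → ℝ → ℝ) (x : ℝ → ℝ) :
    ℝ → ℝ := fun s =>
  ((b - a) / m) *
    ∑ j ∈ Finset.range m, ∑ i, w i * κ s (qNode a b μ m j i) * x (qNode a b μ m j i)

/-- Nyström operator, Urysohn kernel. -/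
def nystU {ρ : ℕ} (a b : ℝ) (w μ : Fin ρ → ℝ) (m : ℕ) (κ : ℝ → ℝ → ℝ → ℝ) (x : ℝ → ℝ) :
    ℝ → ℝ := fun s =>
  ((b - a) / m) *
    ∑ j ∈ Finset.range m, ∑ i, w i * κ s (qNode a b μ m j i) (x (qNode a b μ m j i))

/-- Fréchet derivative `K_m'(x) v` of the Nyström operator. -/
def nystU' {ρ : ℕ} (a b : ℝ) (w μ : Fin ρ → ℝ) (m : ℕ) (κ : ℝ → ℝ → ℝ → ℝ) (x v : ℝ → ℝ) :
    ℝ → ℝ := fun s =>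
  ((b - a) / m) *
    ∑ j ∈ Finset.range m, ∑ i,
      w i * deriv (κ s (qNode a b μ m j i)) (x (qNode a b μ m j i)) * v (qNode a b μ m j i)

/-- Collocation nodes `τ_i^{k+1}`, `k = 0, …, n-1`. -/
def cNode {r : ℕ} (a b : ℝ) (q : Fin r → ℝ) (n k : ℕ) (i : Fin r) : ℝ :=
  a + (k : ℝ) * ((b - a) / n) + q i * ((b - a) / n)

/-- Index of the subinterval of the uniform partition of `[a,b]` containing `t`. -/
def iIdx (a b : ℝ) (n : ℕ) (t : ℝ) : ℕ :=
  min (n - 1) (⌊(t - a) / ((b - a) / n)⌋.toNat)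

/-- Piecewise-polynomial interpolatory projection at the `r` Gauss points of each
subinterval of the uniform partition of `[a,b]` into `n` parts. -/
def projQ {r : ℕ} (a b : ℝ) (q : Fin r → ℝ) (n : ℕ) (x : ℝ → ℝ) : ℝ → ℝ := fun t =>
  (Lagrange.interpolate Finset.univ (cNode a b q n (iIdx a b n t))
    fun i => x (cNode a b q n (iIdx a b n t) i)).eval t

/-- Discrete modified projection operator, linear case. -/
def modL {ρ r : ℕ} (a b : ℝ) (w μ : Fin ρ → ℝ) (q : Fin r → ℝ) (n m : ℕ)
    (κ : ℝ → ℝ → ℝ) (x : ℝ → ℝ) : ℝ → ℝ :=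
  projQ a b q n (nystL a b w μ m κ x) + nystL a b w μ m κ (projQ a b q n x)
    - projQ a b q n (nystL a b w μ m κ (projQ a b q n x))

/-- Discrete modified projection operator, Urysohn case. -/
def modU {ρ r : ℕ} (a b : ℝ) (w μ : Fin ρ → ℝ) (q : Fin r → ℝ) (n m : ℕ)
    (κ : ℝ → ℝ → ℝ → ℝ) (x : ℝ → ℝ) : ℝ → ℝ :=
  projQ a b q n (nystU a b w μ m κ x) + nystU a b w μ m κ (projQ a b q n x)
    - projQ a b q n (nystU a b w μ m κ (projQ a b q n x))

/-- Fréchet derivative of `modU` at `x`, applied to `v`. -/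
def modU' {ρ r : ℕ} (a b : ℝ) (w μ : Fin ρ → ℝ) (q : Fin r → ℝ) (n m : ℕ)
    (κ : ℝ → ℝ → ℝ → ℝ) (x v : ℝ → ℝ) : ℝ → ℝ :=
  projQ a b q n (nystU' a b w μ m κ x v)
    + nystU' a b w μ m κ (projQ a b q n x) (projQ a b q n v)
    - projQ a b q n (nystU' a b w μ m κ (projQ a b q n x) (projQ a b q n v))

/-- `‖x‖_{k,∞}`. -/
def CkNorm (a b : ℝ) (k : ℕ) (x : ℝ → ℝ) : ℝ :=
  ⨆ p : Fin (k + 1) × Set.Icc a b, |iteratedDeriv (p.1 : ℕ) x p.2.1|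

/-- Mixed partial derivative `∂^{i+j} κ / ∂s^i ∂t^j`. -/
def pder (i j : ℕ) (κ : ℝ → ℝ → ℝ) (s t : ℝ) : ℝ :=
  iteratedDeriv i (fun s' => iteratedDeriv j (κ s') t) s

/-- `‖κ‖_{k,∞}`. -/
def kerNorm (a b : ℝ) (k : ℕ) (κ : ℝ → ℝ → ℝ) : ℝ :=
  ⨆ p : {ij : ℕ × ℕ // ij.1 + ij.2 ≤ k} × (Set.Icc a b × Set.Icc a b),
    |pder p.1.1.1 p.1.1.2 κ p.2.1.1 p.2.2.1|

/-- `W = ∑ |w i|`. -/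
def Wsum {ρ : ℕ} (w : Fin ρ → ℝ) : ℝ := ∑ i, |w i|

/-- `∂κ/∂u`, Urysohn kernel. -/
def du (κ : ℝ → ℝ → ℝ → ℝ) (s t u : ℝ) : ℝ := deriv (κ s t) u

/-- `∂²κ/∂u²`, Urysohn kernel. -/
def du2 (κ : ℝ → ℝ → ℝ → ℝ) (s t u : ℝ) : ℝ := deriv (deriv (κ s t)) u

/-- supremum of `|g(s,t,u)|` over `s, t ∈ [a,b]`, `|u| ≤ B`. -/
def supU (a b B : ℝ) (g : ℝ → ℝ → ℝ → ℝ) : ℝ :=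
  ⨆ v : Set.Icc a b × Set.Icc a b × Set.Icc (-B) B, |g v.1.1 v.2.1.1 v.2.2.1|

/-- `∂κ/∂u` exists everywhere and is continuous. -/
def Smooth1 (κ : ℝ → ℝ → ℝ → ℝ) : Prop :=
  (∀ s t : ℝ, Differentiable ℝ (κ s t)) ∧
    Continuous fun v : ℝ × ℝ × ℝ => du κ v.1 v.2.1 v.2.2

/-- `∂²κ/∂u²` exists everywhere and is continuous. -/
def Smooth2 (κ : ℝ → ℝ → ℝ → ℝ) : Prop :=
  (∀ s t : ℝ, Differentiable ℝ (deriv (κ s t))) ∧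
    Continuous fun v : ℝ × ℝ × ℝ => du2 κ v.1 v.2.1 v.2.2



/-! ### Auxiliary lemmas -/

private lemma taylor1_lt' {g : ℝ → ℝ} (hd : Differentiable ℝ g) (hd' : Differentiable ℝ (deriv g))
    {u v C : ℝ} (huv : u < v) (hC : ∀ x ∈ Set.Icc u v, |deriv (deriv g) x| ≤ C) :
    |g v - g u - deriv g u * (v - u)| ≤ C / 2 * (v - u) ^ 2 := by
  have hC1 : ContDiff ℝ 1 g := contDiff_one_iff_deriv.mpr ⟨hd, hd'.continuous⟩
  have hud := uniqueDiffOn_Icc huv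
  have hEq1 : ∀ x ∈ Icc u v, iteratedDerivWithin 1 g (Icc u v) x = deriv g x := fun x hx => by
    rw [iteratedDerivWithin_one, (hd x).derivWithin (hud x hx)]
  have hdiff : DifferentiableOn ℝ (iteratedDerivWithin 1 g (Icc u v)) (Ioo u v) :=
    (hd'.differentiableOn).congr fun x hx => hEq1 x (Ioo_subset_Icc_self hx)
  obtain ⟨x', hx', hrem⟩ :=
    taylor_mean_remainder_lagrange (f := g) (n := 1) huv.ne
      (by rw [uIcc_of_le huv.le]; exact hC1.contDiffOn (s := Icc u v))
      (by rw [uIcc_of_le huv.le, uIoo_of_le huv.le]; exact hdiff)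
  rw [uIoo_of_le huv.le] at hx'
  rw [uIcc_of_le huv.le] at hrem
  have hx'' : x' ∈ Icc u v := Ioo_subset_Icc_self hx'
  have htay : taylorWithinEval g 1 (Icc u v) u v = g u + deriv g u * (v - u) := by
    rw [taylor_within_apply]
    simp [Finset.sum_range_succ, hEq1 u (left_mem_Icc.mpr huv.le)]
    ring
  have h2nd : iteratedDerivWithin 2 g (Icc u v) x' = deriv (deriv g) x' := by
    rw [show (2:ℕ) = 1 + 1 from rfl, iteratedDerivWithin_succ,
      derivWithin_congr hEq1 (hEq1 x' hx''), (hd' x').derivWithin (hud x' hx'')]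
  rw [htay] at hrem
  have hkey : g v - g u - deriv g u * (v - u) = deriv (deriv g) x' * (v - u) ^ 2 / 2 := by
    rw [show g v - g u - deriv g u * (v-u) = g v - (g u + deriv g u * (v-u)) by ring, hrem, h2nd]
    norm_num [Nat.factorial]
  rw [hkey, abs_div, abs_mul]
  have h1 : |deriv (deriv g) x'| ≤ C := hC x' hx''
  have h2 : |(v - u) ^ 2| = (v - u) ^ 2 := abs_of_nonneg (sq_nonneg _)
  rw [h2, abs_of_nonneg (by norm_num : (0:ℝ) ≤ 2)]
  rw [div_le_iff₀ (by norm_num : (0:ℝ) < 2)]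
  nlinarith [sq_nonneg (v - u), abs_nonneg (deriv (deriv g) x')]

private lemma taylor1' {g : ℝ → ℝ} (hd : Differentiable ℝ g) (hd' : Differentiable ℝ (deriv g))
    {u v C : ℝ} (hC : ∀ x ∈ Set.uIcc u v, |deriv (deriv g) x| ≤ C) :
    |g v - g u - deriv g u * (v - u)| ≤ C / 2 * (v - u) ^ 2 := by
  rcases lt_trichotomy u v with h | h | h
  · exact taylor1_lt' hd hd' h (fun x hx => hC x (by rwa [uIcc_of_le h.le]))
  · simp [h]
  · set G : ℝ → ℝ := fun t => g (2 * u - t) with hG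
    have hlin : ∀ t : ℝ, HasDerivAt (fun t : ℝ => 2 * u - t) (-1) t := fun t => by
      simpa using (hasDerivAt_id t).const_sub (2 * u)
    have hdG : deriv G = fun t => -deriv g (2 * u - t) := by
      funext t
      have := ((hd (2 * u - t)).hasDerivAt.comp t (hlin t))
      exact this.deriv.trans (by ring)
    have hGd : Differentiable ℝ G := hd.comp ((differentiable_const _).sub differentiable_id)
    have hGd' : Differentiable ℝ (deriv G) := by
      rw [hdG]
      exact (hd'.comp ((differentiable_const _).sub differentiable_id)).neg
    have hddG : ∀ x : ℝ, deriv (deriv G) x = deriv (deriv g) (2 * u - x) := by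
      intro x
      rw [hdG]
      have := (((hd' (2 * u - x)).hasDerivAt.comp x (hlin x)).neg)
      exact this.deriv.trans (by ring)
    have huv' : u < 2 * u - v := by linarith
    have hCG : ∀ x ∈ Set.Icc u (2 * u - v), |deriv (deriv G) x| ≤ C := by
      intro x hx
      rw [hddG]
      apply hC
      rw [uIcc_of_ge h.le]
      obtain ⟨h1, h2⟩ := hx
      exact ⟨by linarith, by linarith⟩
    have hmain := taylor1_lt' hGd hGd' huv' hCG
    have e1 : G (2 * u - v) = g v := by norm_num [hG]
    have e2 : G u = g u := by simp only [hG]; rw [show 2*u - u = u by ring]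
    have e3 : deriv G u = -deriv g u := by rw [hdG]; simp only; rw [show 2*u - u = u by ring]
    rw [e1, e2, e3] at hmain
    have hfin : |g v - g u - deriv g u * (v - u)| ≤ C / 2 * (2 * u - v - u) ^ 2 := by
      convert hmain using 2
      ring
    calc _ ≤ C / 2 * (2 * u - v - u) ^ 2 := hfin
      _ = C / 2 * (v - u) ^ 2 := by ring

private lemma le_supIcc' {a b : ℝ} {x : ℝ → ℝ} (hx : BddIcc a b x) {t : ℝ}
    (ht : t ∈ Set.Icc a b) : |x t| ≤ supIcc a b x := by
  obtain ⟨M, hM⟩ := hx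
  exact le_ciSup (f := fun t : Set.Icc a b => |x t.1|)
    ⟨M, by rintro y ⟨⟨t', ht'⟩, rfl⟩; exact hM t' ht'⟩ ⟨t, ht⟩

private lemma supIcc_nonneg' {a b : ℝ} (hab : a ≤ b) {x : ℝ → ℝ} (hx : BddIcc a b x) :
    0 ≤ supIcc a b x :=
  (abs_nonneg _).trans (le_supIcc' hx ⟨le_rfl, hab⟩)

private lemma le_supU' {a b B : ℝ} {g : ℝ → ℝ → ℝ → ℝ}
    (hg : Continuous fun v : ℝ × ℝ × ℝ => g v.1 v.2.1 v.2.2)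
    {s t u : ℝ} (hs : s ∈ Set.Icc a b) (ht : t ∈ Set.Icc a b) (hu : u ∈ Set.Icc (-B) B) :
    |g s t u| ≤ supU a b B g := by
  obtain ⟨M, hM⟩ := (((isCompact_Icc (a := a) (b := b)).prod
      ((isCompact_Icc (a := a) (b := b)).prod
        (isCompact_Icc (a := -B) (b := B)))).exists_bound_of_continuousOn hg.continuousOn)
  refine le_ciSup
    (f := fun v : Set.Icc a b × Set.Icc a b × Set.Icc (-B) B => |g v.1.1 v.2.1.1 v.2.2.1|)
    ⟨M, ?_⟩ ⟨⟨s, hs⟩, ⟨t, ht⟩, ⟨u, hu⟩⟩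
  rintro y ⟨⟨⟨s', hs'⟩, ⟨t', ht'⟩, ⟨u', hu'⟩⟩, rfl⟩
  simpa using hM (s', t', u') ⟨hs', ht', hu'⟩

private lemma supU_nonneg' {a b B : ℝ} (hab : a ≤ b) (hB : 0 ≤ B) {g : ℝ → ℝ → ℝ → ℝ}
    (hg : Continuous fun v : ℝ × ℝ × ℝ => g v.1 v.2.1 v.2.2) :
    0 ≤ supU a b B g :=
  (abs_nonneg _).trans (le_supU' hg ⟨le_rfl, hab⟩ ⟨le_rfl, hab⟩ ⟨le_rfl, by linarith⟩)

private lemma qNode_mem' {ρ : ℕ} {a b : ℝ} (hab : a < b) {μ : Fin ρ → ℝ}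
    (hμ : ∀ i, μ i ∈ Set.Ioo (0:ℝ) 1) {m j : ℕ} (hj : j < m) (i : Fin ρ) :
    qNode a b μ m j i ∈ Set.Icc a b := by
  have hm0 : (0:ℝ) < m := Nat.cast_pos.mpr (by omega)
  have hh : 0 < (b - a) / m := div_pos (sub_pos.mpr hab) hm0
  obtain ⟨hμ1, hμ2⟩ := hμ i
  have hj' : (j : ℝ) + 1 ≤ m := by exact_mod_cast hj
  have hj0 : (0:ℝ) ≤ j := Nat.cast_nonneg j
  have hb : a + (m:ℝ) * ((b - a) / m) = b := by field_simp; ring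
  constructor
  · unfold qNode
    nlinarith [mul_nonneg hj0 hh.le, mul_pos hμ1 hh]
  · unfold qNode
    nlinarith [mul_le_mul_of_nonneg_right (show (j:ℝ) + μ i ≤ m by linarith) hh.le]

/-- Proposition 5.1. -/
theorem stmt12 {ρ : ℕ} (w μ : Fin ρ → ℝ) (hμ : ∀ i, μ i ∈ Set.Ioo (0:ℝ) 1)
    (a b : ℝ) (hab : a < b) (κ : ℝ → ℝ → ℝ → ℝ)
    (hκ : Continuous fun v : ℝ × ℝ × ℝ => κ v.1 v.2.1 v.2.2)
    (h1 : Smooth1 κ) (h2 : Smooth2 κ)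
    (f : ℝ → ℝ) (hfb : BddIcc a b f)
    (δ₀ : ℝ) (hδ₀ : 0 < δ₀) (φ : ℝ → ℝ) (hφ : BddIcc a b φ)
    (m : ℕ) (hm : 1 ≤ m)
    (φm : ℝ → ℝ) (hφmB : ∀ t ∈ Set.Icc a b, |φm t - φ t| ≤ δ₀) (hφmb : BddIcc a b φm)
    (hfix : ∀ s, φm s - nystU a b w μ m κ φm s = f s)
    (z : ℝ → ℝ) (hzB : ∀ t ∈ Set.Icc a b, |z t - φ t| ≤ δ₀) (hzb : BddIcc a b z) :
    (∀ s ∈ Set.Icc a b,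
      |(nystU a b w μ m κ z s + f s) - φm s - nystU' a b w μ m κ φm (z - φm) s| ≤
        supU a b (supIcc a b φ + δ₀) (du2 κ) * (b - a) * Wsum w / 2 *
          supIcc a b (z - φm) ^ 2) ∧
    ∀ (c hq hh : ℝ), 0 < hq → 0 < hh → ∀ dd : ℤ, ∀ rr : ℕ,
      supIcc a b (z - φm) ≤ c * max (hq ^ dd) (hh ^ (3 * rr)) →
      ∀ s ∈ Set.Icc a b,
        |(nystU a b w μ m κ z s + f s) - φm s - nystU' a b w μ m κ φm (z - φm) s| ≤
          supU a b (supIcc a b φ + δ₀) (du2 κ) * (b - a) * Wsum w / 2 *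
            (c ^ 2 * max (hq ^ dd) (hh ^ (3 * rr)) ^ 2) := by
  have habl : a ≤ b := hab.le
  have hm0 : (0:ℝ) < m := Nat.cast_pos.mpr (by omega)
  have hmne : (m:ℝ) ≠ 0 := hm0.ne'
  have hht : 0 < (b - a) / m := div_pos (sub_pos.mpr hab) hm0
  set B := supIcc a b φ + δ₀ with hBdef
  have hB : 0 ≤ B := add_nonneg (supIcc_nonneg' habl hφ) hδ₀.le
  set C₆ := supU a b B (du2 κ) with hC6def
  have hC6 : 0 ≤ C₆ := supU_nonneg' habl hB h2.2
  have hW : 0 ≤ Wsum w := Finset.sum_nonneg fun i _ => abs_nonneg _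
  have hsub : BddIcc a b (z - φm) := by
    obtain ⟨M1, hM1⟩ := hzb
    obtain ⟨M2, hM2⟩ := hφmb
    exact ⟨M1 + M2, fun t ht => by
      simp only [Pi.sub_apply]
      calc |z t - φm t| ≤ |z t| + |φm t| := abs_sub _ _
        _ ≤ M1 + M2 := add_le_add (hM1 t ht) (hM2 t ht)⟩
  set N := supIcc a b (z - φm) with hNdef
  have hN0 : 0 ≤ N := supIcc_nonneg' habl hsub
  have hNle : ∀ t ∈ Set.Icc a b, |z t - φm t| ≤ N := fun t ht => by
    have := le_supIcc' hsub ht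
    simpa [Pi.sub_apply] using this
  have hmemB : ∀ (x : ℝ → ℝ), (∀ t ∈ Set.Icc a b, |x t - φ t| ≤ δ₀) →
      ∀ t ∈ Set.Icc a b, x t ∈ Set.Icc (-B) B := by
    intro x hx t ht
    rw [Set.mem_Icc, ← abs_le]
    calc |x t| = |φ t + (x t - φ t)| := by ring_nf
      _ ≤ |φ t| + |x t - φ t| := abs_add_le _ _
      _ ≤ supIcc a b φ + δ₀ := add_le_add (le_supIcc' hφ ht) (hx t ht)
  have part1 : ∀ s ∈ Set.Icc a b,
      |(nystU a b w μ m κ z s + f s) - φm s - nystU' a b w μ m κ φm (z - φm) s| ≤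
        C₆ * (b - a) * Wsum w / 2 * N ^ 2 := by
    intro s hs
    have hT : ∀ j ∈ Finset.range m, ∀ i : Fin ρ,
        |κ s (qNode a b μ m j i) (z (qNode a b μ m j i)) -
          κ s (qNode a b μ m j i) (φm (qNode a b μ m j i)) -
          deriv (κ s (qNode a b μ m j i)) (φm (qNode a b μ m j i)) *
            (z (qNode a b μ m j i) - φm (qNode a b μ m j i))| ≤ C₆ / 2 * N ^ 2 := by
      intro j hj i
      set ζ := qNode a b μ m j i with hζdef
      have hζ : ζ ∈ Set.Icc a b := qNode_mem' hab hμ (Finset.mem_range.mp hj) i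
      have hφmu : φm ζ ∈ Set.Icc (-B) B := hmemB φm hφmB ζ hζ
      have hzu : z ζ ∈ Set.Icc (-B) B := hmemB z hzB ζ hζ
      have hsubset : Set.uIcc (φm ζ) (z ζ) ⊆ Set.Icc (-B) B := uIcc_subset_Icc hφmu hzu
      have hCx : ∀ x ∈ Set.uIcc (φm ζ) (z ζ), |deriv (deriv (κ s ζ)) x| ≤ C₆ := fun x hx =>
        le_supU' h2.2 hs hζ (hsubset hx)
      have htl := taylor1' (h1.1 s ζ) (h2.1 s ζ) hCx
      refine htl.trans ?_
      have hsq : (z ζ - φm ζ) ^ 2 ≤ N ^ 2 := by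
        rw [← sq_abs]
        exact pow_le_pow_left₀ (abs_nonneg _) (hNle ζ hζ) 2
      exact mul_le_mul_of_nonneg_left hsq (by positivity)
    have key : nystU a b w μ m κ z s + f s - φm s - nystU' a b w μ m κ φm (z - φm) s
        = (b - a) / m * ∑ j ∈ Finset.range m, ∑ i,
            w i * (κ s (qNode a b μ m j i) (z (qNode a b μ m j i)) -
              κ s (qNode a b μ m j i) (φm (qNode a b μ m j i)) -
              deriv (κ s (qNode a b μ m j i)) (φm (qNode a b μ m j i)) *
                (z (qNode a b μ m j i) - φm (qNode a b μ m j i))) := by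
      rw [← hfix s]
      simp only [nystU, nystU', Pi.sub_apply]
      rw [show ∀ T₁ T₂ T₃ : ℝ, (b - a) / m * T₁ + (φm s - (b - a) / m * T₂) - φm s -
            (b - a) / m * T₃ = (b - a) / m * (T₁ - T₂ - T₃) from fun _ _ _ => by ring]
      congr 1
      rw [← Finset.sum_sub_distrib, ← Finset.sum_sub_distrib]
      refine Finset.sum_congr rfl fun j _ => ?_
      rw [← Finset.sum_sub_distrib, ← Finset.sum_sub_distrib]
      exact Finset.sum_congr rfl fun i _ => by ring
    rw [key, abs_mul, abs_of_nonneg hht.le]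
    have hsum : |∑ j ∈ Finset.range m, ∑ i,
        w i * (κ s (qNode a b μ m j i) (z (qNode a b μ m j i)) -
          κ s (qNode a b μ m j i) (φm (qNode a b μ m j i)) -
          deriv (κ s (qNode a b μ m j i)) (φm (qNode a b μ m j i)) *
            (z (qNode a b μ m j i) - φm (qNode a b μ m j i)))|
        ≤ ∑ j ∈ Finset.range m, ∑ i : Fin ρ, |w i| * (C₆ / 2 * N ^ 2) := by
      refine (Finset.abs_sum_le_sum_abs _ _).trans (Finset.sum_le_sum fun j hj => ?_)
      refine (Finset.abs_sum_le_sum_abs _ _).trans (Finset.sum_le_sum fun i _ => ?_)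
      rw [abs_mul]
      exact mul_le_mul_of_nonneg_left (hT j hj i) (abs_nonneg _)
    have hsum2 : ∑ j ∈ Finset.range m, ∑ i : Fin ρ, |w i| * (C₆ / 2 * N ^ 2)
        = (m : ℝ) * (Wsum w * (C₆ / 2 * N ^ 2)) := by
      simp only [← Finset.sum_mul, Finset.sum_const, Finset.card_range, nsmul_eq_mul, Wsum]
      ring
    calc (b - a) / m * |_| ≤ (b - a) / m * ((m : ℝ) * (Wsum w * (C₆ / 2 * N ^ 2))) := by
          rw [← hsum2]
          exact mul_le_mul_of_nonneg_left hsum hht.le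
      _ = C₆ * (b - a) * Wsum w / 2 * N ^ 2 := by field_simp
  refine ⟨part1, ?_⟩
  intro c hq hh hhq hhh dd rr hle s hs
  have hN2 : N ^ 2 ≤ c ^ 2 * max (hq ^ dd) (hh ^ (3 * rr)) ^ 2 := by
    have := pow_le_pow_left₀ hN0 hle 2
    rwa [mul_pow] at this
  refine (part1 s hs).trans ?_
  exact mul_le_mul_of_nonneg_left hN2
    (div_nonneg (mul_nonneg (mul_nonneg hC6 (sub_nonneg.mpr habl)) hW) (by norm_num))

end
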